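/- Let n ≥ 2 and let J₀ denote the 2n × 2n real matrix written in n × n blocks as J₀ = [[0, I_n], [−I_n, 0]], where I_n is the n × n identity matrix. Let S be the set of all real 2n × 2n matrices Z such that for every real number λ > 0 the matrix λ · Zᵀ J₀ Z has at least one irrational entry (i.e., λ Zᵀ J₀ Z is not a matrix with all entries rational). Then S is dense in the space of all real 2n × 2n matrices with its standard topology. -/

import Mathlib

noncomputable section

open Matrix

/-- The standard linear complex structure matrix `J₀ = [[0, Iₙ], [−Iₙ, 0]]` on `ℝ^{2n}`,
written in `n × n` blocks (so indexed by `Fin n ⊕ Fin n`). -/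
def J0 (n : ℕ) : Matrix (Fin n ⊕ Fin n) (Fin n ⊕ Fin n) ℝ :=
  Matrix.fromBlocks 0 1 (-1) 0

def gform (n : ℕ) (x y : Fin n ⊕ Fin n → ℝ) : ℝ := x ⬝ᵥ (J0 n).mulVec y

lemma entry_eq (n : ℕ) (M : Matrix (Fin n ⊕ Fin n) (Fin n ⊕ Fin n) ℝ) (i j) :
    (Mᵀ * J0 n * M) i j = gform n (fun k => M k i) (fun k => M k j) := by
  simp only [gform, Matrix.mul_apply, Matrix.mulVec, dotProduct, transpose_apply,
    Finset.sum_mul, Finset.mul_sum]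
  rw [Finset.sum_comm]
  exact Finset.sum_congr rfl fun k _ => Finset.sum_congr rfl fun l _ => by ring

lemma gform_bilin (n : ℕ) (x u y w : Fin n ⊕ Fin n → ℝ) (a b : ℝ) :
    gform n (x + a • u) (y + b • w) =
      gform n x y + a * gform n u y + b * gform n x w + a * b * gform n u w := by
  simp [gform, mulVec_add, mulVec_smul, dotProduct_add, add_dotProduct,
    dotProduct_smul, smul_dotProduct, smul_eq_mul]
  ring

lemma gform_left (n : ℕ) (x u y : Fin n ⊕ Fin n → ℝ) (a : ℝ) :
    gform n (x + a • u) y = gform n x y + a * gform n u y := by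
  simp [gform, add_dotProduct, smul_dotProduct, smul_eq_mul]

lemma J0_mulVec_inr (n : ℕ) (x : Fin n ⊕ Fin n → ℝ) (i : Fin n) :
    ((J0 n).mulVec x) (Sum.inr i) = -(x (Sum.inl i)) := by
  simp [J0, mulVec, dotProduct, Fintype.sum_sum_type, Matrix.one_apply]

lemma gform_single (n : ℕ) (i : Fin n) :
    gform n (Pi.single (Sum.inl i) (1:ℝ)) (Pi.single (Sum.inr i) (1:ℝ)) = 1 := by
  simp [gform, J0, mulVec, dotProduct, Pi.single_apply, Fintype.sum_sum_type,
    Matrix.one_apply]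

lemma quad_countable (A B : ℝ) : Set.Countable {x : ℝ | x ^ 2 + B * x + A = 0} := by
  have hsub : {x : ℝ | x ^ 2 + B * x + A = 0} ⊆
      {(-B + Real.sqrt (B ^ 2 - 4 * A)) / 2, (-B - Real.sqrt (B ^ 2 - 4 * A)) / 2} := by
    intro x hx
    simp only [Set.mem_setOf_eq] at hx
    have hD : 0 ≤ B ^ 2 - 4 * A := by nlinarith [sq_nonneg (2 * x + B)]
    have hs := Real.sq_sqrt hD
    have h1 : (2 * x + B - Real.sqrt (B ^ 2 - 4 * A)) *
        (2 * x + B + Real.sqrt (B ^ 2 - 4 * A)) = 0 := by nlinarith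
    rcases mul_eq_zero.1 h1 with h | h
    · left; linarith
    · right; simp only [Set.mem_singleton_iff]; linarith
  exact Set.Countable.mono hsub ((Set.finite_singleton _).insert _).countable

/-- The set of real `2n × 2n` matrices `Z` (`n ≥ 2`) such that `λ Zᵀ J₀ Z` has an irrational
entry for every `λ > 0` is dense in the space of all real `2n × 2n` matrices. -/
theorem stmt5 (n : ℕ) (hn : 2 ≤ n) :
    Dense {Z : Matrix (Fin n ⊕ Fin n) (Fin n ⊕ Fin n) ℝ |
      ∀ lam : ℝ, 0 < lam →
        ¬ ∀ i j, ∃ q : ℚ, (lam • (Zᵀ * J0 n * Z)) i j = (q : ℝ)} := by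
  obtain ⟨m, rfl⟩ : ∃ m, n = m + 2 := ⟨n - 2, by omega⟩
  rw [dense_iff_inter_open]
  rintro U hU ⟨Z, hZU⟩
  have h01 : (0 : Fin (m + 2)) ≠ 1 := by simp [Fin.ext_iff]
  let v : Fin (m+2) ⊕ Fin (m+2) → ℝ := Pi.single (Sum.inl 0) 1
  let w : Fin (m+2) ⊕ Fin (m+2) → ℝ := Pi.single (Sum.inr 0) 1
  let c1 : Fin (m+2) ⊕ Fin (m+2) → ℝ := fun k => Z k (Sum.inl 0)
  let c2 : Fin (m+2) ⊕ Fin (m+2) → ℝ := fun k => Z k (Sum.inl 1)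
  let c3 : Fin (m+2) ⊕ Fin (m+2) → ℝ := fun k => Z k (Sum.inr 0)
  let c4 : Fin (m+2) ⊕ Fin (m+2) → ℝ := fun k => Z k (Sum.inr 1)
  let u0 : Fin (m+2) ⊕ Fin (m+2) → ℝ := (J0 (m+2)).mulVec c3
  let u1 : Fin (m+2) ⊕ Fin (m+2) → ℝ := (J0 (m+2)).mulVec v
  let P : Matrix (Fin (m+2) ⊕ Fin (m+2)) (Fin (m+2) ⊕ Fin (m+2)) ℝ := Matrix.of fun k l =>
    if l = Sum.inl 1 then v k else if l = Sum.inr 0 then v k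
      else if l = Sum.inr 1 then w k else 0
  let F : ℝ × ℝ → Matrix (Fin (m+2) ⊕ Fin (m+2)) (Fin (m+2) ⊕ Fin (m+2)) ℝ := fun p =>
    Matrix.of fun k l =>
      Z k l + p.1 * P k l + p.2 * ((u0 k + p.1 * u1 k) * (if l = Sum.inl 0 then 1 else 0))
  have hFcont : Continuous F := by
    apply continuous_matrix
    intro k l
    simp only [F, Matrix.of_apply]
    fun_prop
  have hF00 : F (0, 0) = Z := by
    ext k l
    simp [F]
  obtain ⟨ε, hε, hball⟩ := Metric.isOpen_iff.1 (hU.preimage hFcont) (0, 0)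
    (by rw [Set.mem_preimage, hF00]; exact hZU)
  -- choose δ
  let A : ℝ := gform (m+2) c2 c4
  let B : ℝ := gform (m+2) v c4 + gform (m+2) c2 w
  have hbad1 : Set.Countable
      ({x : ℝ | x ^ 2 + B * x + A = 0} ∪ {-(Z (Sum.inl 0) (Sum.inr 0))}) :=
    (quad_countable A B).union (Set.countable_singleton _)
  obtain ⟨δ, hδc, hδmem⟩ := (hbad1.dense_compl ℝ).exists_mem_open Metric.isOpen_ball
    ⟨0, Metric.mem_ball_self (by linarith)⟩ (U := Metric.ball (0:ℝ) (ε/2))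
  rw [Set.mem_compl_iff, Set.mem_union] at hδc
  push_neg at hδc
  obtain ⟨hq, hδ3⟩ := hδc
  simp only [Set.mem_setOf_eq] at hq
  simp only [Set.mem_singleton_iff] at hδ3
  -- perturbed columns
  let c2' := c2 + δ • v
  let c3' := c3 + δ • v
  let c4' := c4 + δ • w
  let u := u0 + δ • u1
  have hu : u = (J0 (m+2)).mulVec c3' := by
    simp only [u, u0, u1, c3', mulVec_add, mulVec_smul]
  have hc3 : c3' (Sum.inl 0) ≠ 0 := by
    simp only [c3', Pi.add_apply, Pi.smul_apply, v, Pi.single_eq_same, smul_eq_mul,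
      mul_one, c3]
    intro h; exact hδ3 (by linarith)
  let s : ℝ := gform (m+2) u c3'
  have hs : 0 < s := by
    have hsum : s = ∑ k, u k * u k := by
      simp only [s, gform, ← hu, dotProduct]
    rw [hsum]
    apply Finset.sum_pos' (fun i _ => mul_self_nonneg _)
    refine ⟨Sum.inr 0, Finset.mem_univ _, ?_⟩
    have h' : u (Sum.inr 0) = -(c3' (Sum.inl 0)) := by rw [hu, J0_mulVec_inr]
    rw [h']
    exact mul_self_pos.mpr (neg_ne_zero.mpr hc3)
  -- value of q entry
  have hvw : gform (m+2) v w = 1 := gform_single (m+2) 0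
  let qval : ℝ := gform (m+2) c2' c4'
  have hqval : qval = δ ^ 2 + B * δ + A := by
    show gform (m+2) (c2 + δ • v) (c4 + δ • w) = _
    rw [gform_bilin, hvw]
    simp only [A, B]
    ring
  have hqne : qval ≠ 0 := by rw [hqval]; exact hq
  -- choose t
  let pc : ℝ := gform (m+2) c1 c3'
  have hbad2 : Set.Countable {t : ℝ | ∃ r : ℚ, pc + t * s = (r : ℝ) * qval} := by
    apply Set.Countable.mono ?_ (Set.countable_range fun r : ℚ => ((r : ℝ) * qval - pc) / s)
    rintro t ⟨r, hr⟩
    exact ⟨r, by field_simp; linarith⟩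
  obtain ⟨t, htc, htmem⟩ := (hbad2.dense_compl ℝ).exists_mem_open Metric.isOpen_ball
    ⟨0, Metric.mem_ball_self (by linarith)⟩ (U := Metric.ball (0:ℝ) (ε/2))
  simp only [Set.mem_compl_iff, Set.mem_setOf_eq] at htc
  push_neg at htc
  -- the perturbed matrix
  refine ⟨F (δ, t), hball ?_, ?_⟩
  · rw [Metric.mem_ball] at hδmem htmem ⊢
    rw [Prod.dist_eq]
    simp only [Real.dist_eq] at *
    apply max_lt <;> linarith [hδmem, htmem]
  · intro lam hlam hall
    obtain ⟨r1, h1⟩ := hall (Sum.inl 0) (Sum.inr 0)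
    obtain ⟨r2, h2⟩ := hall (Sum.inl 1) (Sum.inr 1)
    rw [Matrix.smul_apply, entry_eq, smul_eq_mul] at h1 h2
    have hcol1 : (fun k => F (δ, t) k (Sum.inl 0)) = c1 + t • u := by
      funext k
      simp [F, P, u, u0, u1, c1, h01]
      ring
    have hcol2 : (fun k => F (δ, t) k (Sum.inl 1)) = c2 + δ • v := by
      funext k
      simp [F, P, c2, h01, h01.symm]
    have hcol3 : (fun k => F (δ, t) k (Sum.inr 0)) = c3 + δ • v := by
      funext k
      simp [F, P, c3, h01]
    have hcol4 : (fun k => F (δ, t) k (Sum.inr 1)) = c4 + δ • w := by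
      funext k
      simp [F, P, c4, h01, h01.symm]
    rw [hcol1, hcol3] at h1
    rw [hcol2, hcol4] at h2
    have h1' : lam * (pc + t * s) = (r1 : ℝ) := by
      rw [← h1, gform_left]
    have h2' : lam * qval = (r2 : ℝ) := h2
    have hlam' : lam ≠ 0 := ne_of_gt hlam
    have hr2 : (r2 : ℝ) ≠ 0 := by
      rw [← h2']; exact mul_ne_zero hlam' hqne
    apply htc (r1 / r2)
    push_cast
    rw [div_mul_eq_mul_div, eq_div_iff hr2]
    rw [← h1', ← h2']
    ring

end
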